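/- Let L be a limit operator on a set X with derived topology τ := τ_L, and let D ⊆ X be an open subset that is Hausdorff and locally compact in the subspace topology. If L is of first order (on all of X), then the modified limit operator L* is also of first order, and the topology τ_{L*} derived from L* coincides with (τ*)_Seq, the topology derived from the associated limit operator of the topology τ* generated by the subbasis τ ∪ {X \ K : K a compact subset of D}. -/

import Mathlib

open Set Filter Topology

universe u

/-- A limit operator on `X`: a map from sequences to sets of "limits",
compatible with subsequences. -/
def IsLimitOp {X : Type u} (L : (ℕ → X) → Set X) : Prop :=
  ∀ (σ : ℕ → X) (φ : ℕ → ℕ), StrictMono φ → L σ ⊆ L (σ ∘ φ)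

/-- `C` is sequentially closed with respect to the limit operator `L`. -/
def SeqClosedFor {X : Type u} (L : (ℕ → X) → Set X) (C : Set X) : Prop :=
  ∀ σ : ℕ → X, (∀ n, σ n ∈ C) → L σ ⊆ C

/-- The topology derived from a limit operator `L`: its closed sets are exactly
the sets `C` such that `L σ ⊆ C` for every sequence `σ` with values in `C`. -/
def derivedTop {X : Type u} (L : (ℕ → X) → Set X) (hL : IsLimitOp L) :
    TopologicalSpace X :=
  TopologicalSpace.ofClosed {C | SeqClosedFor L C}
    (fun σ h => absurd (h 0) (Set.notMem_empty _))
    (fun A hA σ hσ p hp => by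
      rw [Set.mem_sInter]
      intro C hC
      exact hA hC σ (fun n => Set.mem_sInter.mp (hσ n) C hC) hp)
    (by
      intro C hC B hB σ hσ p hp
      by_cases hinf : {n | σ n ∈ C}.Infinite
      · exact Or.inl (hC _ (fun n => Nat.nth_mem_of_infinite hinf n)
          (hL σ _ (Nat.nth_strictMono hinf) hp))
      · have hfin : {n | σ n ∈ C}.Finite := Set.not_infinite.mp hinf
        have hBinf : {n | σ n ∈ B}.Infinite :=
          Set.Infinite.mono (fun n hn => (hσ n).resolve_left hn) hfin.infinite_compl
        exact Or.inr (hB _ (fun n => Nat.nth_mem_of_infinite hBinf n)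
          (hL σ _ (Nat.nth_strictMono hBinf) hp)))

/-- The limit operator associated to a topology `t`: it assigns to each sequence
the set of all its limits in `t`. -/
def assocLimOp {X : Type u} (t : TopologicalSpace X) : (ℕ → X) → Set X :=
  fun σ => {p | Filter.Tendsto σ Filter.atTop (@nhds X t p)}

theorem assocLimOp_isLimitOp {X : Type u} (t : TopologicalSpace X) :
    IsLimitOp (assocLimOp t) :=
  fun _σ _φ hφ _p hp => hp.comp hφ.tendsto_atTop

/-- `τ_Seq`: the topology derived from the limit operator associated to `t`. -/
def seqModTop {X : Type u} (t : TopologicalSpace X) : TopologicalSpace X :=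
  derivedTop (assocLimOp t) (assocLimOp_isLimitOp t)

/-- `L` is of first order on `D`. -/
def IsFirstOrderOpOn {X : Type u} (L : (ℕ → X) → Set X) (hL : IsLimitOp L)
    (D : Set X) : Prop :=
  ∀ σ : ℕ → X, (∀ n, σ n ∈ D) → ∀ p ∈ D,
    (p ∈ L σ ↔ Filter.Tendsto σ Filter.atTop (@nhds X (derivedTop L hL) p))

/-- `L` is of first order. -/
def IsFirstOrderOp {X : Type u} (L : (ℕ → X) → Set X) (hL : IsLimitOp L) : Prop :=
  ∀ (σ : ℕ → X) (p : X),
    p ∈ L σ ↔ Filter.Tendsto σ Filter.atTop (@nhds X (derivedTop L hL) p)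

/-- A limit operator is coherent if every constant sequence has its value as a limit. -/
def CoherentOp {X : Type u} (L : (ℕ → X) → Set X) : Prop :=
  ∀ x : X, x ∈ L (fun _ => x)

/-- The transfinite iterates of a limit operator: `L^1 σ = L σ` and, for `i ≠ 1`,
`L^i σ = {p | p ∈ L ρ for some sequence ρ with values in ⋃_{j<i} L^j σ}`. -/
noncomputable def iterOp {X : Type u} (L : (ℕ → X) → Set X) (σ : ℕ → X)
    (i : Ordinal.{0}) : Set X :=
  if i = 1 then L σ
  else {p | ∃ ρ : ℕ → X,
    (∀ n, ∃ j : Ordinal.{0}, ∃ _hj : j < i, ρ n ∈ iterOp L σ j) ∧ p ∈ L ρ}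
termination_by i

open Classical in
/-- The modified limit operator `L*` relative to a subset `D`. -/
noncomputable def modOp {X : Type u} (L : (ℕ → X) → Set X) (D : Set X) :
    (ℕ → X) → Set X := fun σ =>
  if ∃ φ : ℕ → ℕ, StrictMono φ ∧ ∃ p ∈ D, p ∈ L (σ ∘ φ) then L σ ∩ D else L σ

/-- The `D`-separating topology `τ*`: generated by the subbasis consisting of the
`t`-open sets together with the complements of compact subsets of `D`. -/
def sepTop {X : Type u} (t : TopologicalSpace X) (D : Set X) : TopologicalSpace X :=
  TopologicalSpace.generateFrom
    ({U : Set X | @IsOpen X t U} ∪ {V : Set X | ∃ K, K ⊆ D ∧ @IsCompact X t K ∧ V = Kᶜ})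

/-- Condition (A_Fin): `t'` refines `t`. -/
def AFin {X : Type u} (t t' : TopologicalSpace X) : Prop :=
  ∀ U : Set X, @IsOpen X t U → @IsOpen X t' U

/-- Condition (A_Sep): every `p ∈ D` and `q ∉ D` are separated by a `t`-open set
and a `t'`-open set. -/
def ASep {X : Type u} (t t' : TopologicalSpace X) (D : Set X) : Prop :=
  ∀ p ∈ D, ∀ q ∈ (Dᶜ : Set X), ∃ U V : Set X,
    @IsOpen X t U ∧ @IsOpen X t' V ∧ p ∈ U ∧ q ∈ V ∧ U ∩ V = ∅

/-- The restriction of a limit operator `L` to a subset `D`, as an operator on `↥D`: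
`L|_D(σ) = L(σ) ∩ D`. -/
def restrictOp {X : Type u} (L : (ℕ → X) → Set X) (D : Set X) :
    (ℕ → D) → Set D :=
  fun σ => {d : D | (d : X) ∈ L (fun n => (σ n : X))}


/-! ### Auxiliary lemmas -/

theorem isOpen_derivedTop_iff {X : Type u} (L : (ℕ → X) → Set X) (hL : IsLimitOp L) (U : Set X) :
    @IsOpen X (derivedTop L hL) U ↔ SeqClosedFor L Uᶜ := Iff.rfl

theorem isClosed_derivedTop_iff {X : Type u} (L : (ℕ → X) → Set X) (hL : IsLimitOp L) (C : Set X) :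
    @IsClosed X (derivedTop L hL) C ↔ SeqClosedFor L C := by
  letI := derivedTop L hL
  rw [← isOpen_compl_iff]
  rw [isOpen_derivedTop_iff L hL Cᶜ, compl_compl]

theorem exists_subseq_mem {X : Type u} (σ : ℕ → X) (S : Set X) (h : {n | σ n ∈ S}.Infinite) :
    ∃ φ : ℕ → ℕ, StrictMono φ ∧ ∀ n, σ (φ n) ∈ S :=
  ⟨Nat.nth _, Nat.nth_strictMono h, fun n => Nat.nth_mem_of_infinite h n⟩

theorem tendsto_seqModTop_iff {X : Type u} (t : TopologicalSpace X) (σ : ℕ → X) (p : X) :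
    Tendsto σ atTop (@nhds X (seqModTop t) p) ↔ Tendsto σ atTop (@nhds X t p) := by
  constructor
  · intro h
    refine (@tendsto_nhds X t ℕ p σ atTop).2 fun U hU hpU => ?_
    refine (@tendsto_nhds X (seqModTop t) ℕ p σ atTop).1 h U ?_ hpU
    refine (isOpen_derivedTop_iff _ _ U).2 (fun ρ hρ q hq => fun hqU => ?_)
    obtain ⟨n, hn⟩ :=
      (Filter.eventually_iff.2 ((@tendsto_nhds X t ℕ q ρ atTop).1 hq U hU hqU)).exists
    exact hρ n hn
  · intro h
    refine (@tendsto_nhds X (seqModTop t) ℕ p σ atTop).2 fun U hU hpU => ?_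
    by_contra hc
    have hfreq : ∃ᶠ n in atTop, σ n ∈ Uᶜ := Filter.not_eventually.1 hc
    have hinf : {n | σ n ∈ Uᶜ}.Infinite := Nat.frequently_atTop_iff_infinite.1 hfreq
    obtain ⟨φ, hφ, hmem⟩ := exists_subseq_mem σ Uᶜ hinf
    exact (isOpen_derivedTop_iff _ _ U).1 hU (σ ∘ φ) hmem (h.comp hφ.tendsto_atTop) hpU

theorem derivedTop_congr {X : Type u} {L M : (ℕ → X) → Set X} (h : L = M)
    (hL : IsLimitOp L) (hM : IsLimitOp M) : derivedTop L hL = derivedTop M hM := by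
  subst h; rfl

theorem tendsto_sepTop_iff {X : Type u} (t : TopologicalSpace X) (D : Set X) (σ : ℕ → X) (p : X) :
    Tendsto σ atTop (@nhds X (sepTop t D) p) ↔
      (Tendsto σ atTop (@nhds X t p) ∧
        ∀ K : Set X, K ⊆ D → @IsCompact X t K → p ∉ K → ∀ᶠ n in atTop, σ n ∉ K) := by
  rw [sepTop, TopologicalSpace.tendsto_nhds_generateFrom_iff]
  constructor
  · intro h
    constructor
    · exact (@tendsto_nhds X t ℕ p σ atTop).2 fun U hU hpU =>
        h U ((Set.mem_union _ _ _).2 (Or.inl hU)) hpU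
    · intro K hKD hK hpK
      exact h Kᶜ ((Set.mem_union _ _ _).2 (Or.inr ⟨K, hKD, hK, rfl⟩)) hpK
  · rintro ⟨h1, h2⟩ s hs hps
    rcases (Set.mem_union _ _ _).1 hs with hs | ⟨K, hKD, hK, rfl⟩
    · exact (@tendsto_nhds X t ℕ p σ atTop).1 h1 s hs hps
    · exact h2 K hKD hK hps

theorem modOp_eq_assoc {X : Type u} (L : (ℕ → X) → Set X) (hL : IsLimitOp L)
    (D : Set X) (hD : @IsOpen X (derivedTop L hL) D)
    (hT2 : @T2Space D (TopologicalSpace.induced (Subtype.val : D → X) (derivedTop L hL)))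
    (hLC : @LocallyCompactSpace D (TopologicalSpace.induced (Subtype.val : D → X) (derivedTop L hL)))
    (hfo : IsFirstOrderOp L hL) :
    modOp L D = assocLimOp (sepTop (derivedTop L hL) D) := by
  letI tX : TopologicalSpace X := derivedTop L hL
  haveI hT2' : T2Space D := hT2
  haveI hLC' : LocallyCompactSpace D := hLC
  have hDo : IsOpen D := hD
  -- sequentially closed sets (for tendsto) are closed
  have hseqclosed : ∀ C : Set X,
      (∀ (ρ : ℕ → X) (q : X), (∀ n, ρ n ∈ C) → Tendsto ρ atTop (𝓝 q) → q ∈ C) →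
      IsClosed C := by
    intro C hC
    refine (isClosed_derivedTop_iff L hL C).2 ?_
    intro ρ hρ q hq
    exact hC ρ q hρ ((hfo ρ q).1 hq)
  -- tendsto transfer to the subtype
  have htendD : ∀ (ρ : ℕ → X) (h : ∀ n, ρ n ∈ D) (q : X) (hq : q ∈ D),
      Tendsto ρ atTop (𝓝 q) →
      Tendsto (fun n => (⟨ρ n, h n⟩ : D)) atTop (𝓝 (⟨q, hq⟩ : D)) := by
    intro ρ h q hq hρ
    rw [nhds_subtype_eq_comap]
    exact tendsto_comap_iff.2 hρ
  -- compactness transfer to the subtype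
  have hcompD : ∀ K : Set X, K ⊆ D → IsCompact K →
      IsCompact (Subtype.val ⁻¹' K : Set D) := by
    intro K hKD hK
    rw [Topology.IsEmbedding.subtypeVal.isCompact_iff]
    rwa [Set.image_preimage_eq_of_subset (by rw [Subtype.range_coe]; exact hKD)]
  -- sequential compactness of compact subsets of D
  have hseqcpt : ∀ K : Set X, K ⊆ D → IsCompact K → ∀ σ : ℕ → X, (∀ n, σ n ∈ K) →
      ∃ φ : ℕ → ℕ, StrictMono φ ∧ ∃ q ∈ D, Tendsto (σ ∘ φ) atTop (𝓝 q) := by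
    intro K hKD hK σ hσ
    by_contra hno
    push_neg at hno
    set A : ℕ → Set X := fun n => σ '' {m | n ≤ m} with hA
    have hAK : ∀ n, A n ⊆ K := by
      rintro n x ⟨m, _, rfl⟩; exact hσ m
    have hBclosed : ∀ n, IsClosed (A n ∪ Dᶜ) := by
      intro n
      apply hseqclosed
      intro ρ q hρ hq
      by_cases hqD : q ∈ D
      · left
        have hev : ∀ᶠ k in atTop, ρ k ∈ D :=
          Filter.eventually_iff.2 ((tendsto_nhds.1 hq) D hDo hqD)
        have hev2 : ∀ᶠ k in atTop, ρ k ∈ A n :=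
          hev.mono (fun k hk => (hρ k).resolve_right (fun h => h hk))
        have hinf2 : {k | ρ k ∈ A n}.Infinite :=
          Nat.frequently_atTop_iff_infinite.1 hev2.frequently
        obtain ⟨θ, hθ, hθmem⟩ := exists_subseq_mem ρ (A n) hinf2
        set ρ₀ : ℕ → X := ρ ∘ θ with hρ₀
        have hρ₀q : Tendsto ρ₀ atTop (𝓝 q) := hq.comp hθ.tendsto_atTop
        by_cases hrep : ∃ x, {k | ρ₀ k = x}.Infinite
        · obtain ⟨x, hx⟩ := hrep
          have hxA : x ∈ A n := by
            obtain ⟨k, hk⟩ := hx.nonempty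
            exact hk ▸ hθmem k
          have hxD : x ∈ D := hKD (hAK n hxA)
          obtain ⟨ψ, hψ, hψm⟩ := exists_subseq_mem ρ₀ {x}
            (by simpa [Set.mem_singleton_iff] using hx)
          have h1 : Tendsto (ρ₀ ∘ ψ) atTop (𝓝 q) := hρ₀q.comp hψ.tendsto_atTop
          have hconst : (ρ₀ ∘ ψ) = fun _ => x := funext fun k => hψm k
          have h2 : Tendsto (fun _ : ℕ => x) atTop (𝓝 q) := hconst ▸ h1
          have h3 := htendD (fun _ => x) (fun _ => hxD) q hqD h2
          have h4 : Tendsto (fun _ : ℕ => (⟨x, hxD⟩ : D)) atTop (𝓝 (⟨x, hxD⟩ : D)) :=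
            tendsto_const_nhds
          have h5 : (⟨q, hqD⟩ : D) = ⟨x, hxD⟩ := tendsto_nhds_unique h3 h4
          have hqx : q = x := Subtype.ext_iff.1 h5
          exact hqx ▸ hxA
        · exfalso
          push_neg at hrep
          have hfib : ∀ x, {k | ρ₀ k = x}.Finite := fun x => hrep x
          obtain ⟨m₀, hm₀, hσm₀⟩ := hθmem 0
          have step : ∀ km : ℕ × ℕ, ∃ km' : ℕ × ℕ, km.1 < km'.1 ∧ km.2 < km'.2 ∧
              σ km'.2 = ρ₀ km'.1 := by
            rintro ⟨k, m⟩
            have hFfin : {k' | ρ₀ k' ∈ σ '' {i | i ≤ m}}.Finite := by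
              have heq : {k' | ρ₀ k' ∈ σ '' {i | i ≤ m}} =
                  ⋃ i ∈ Set.Iic m, {k' | ρ₀ k' = σ i} := by
                ext k'
                simp only [Set.mem_setOf_eq, Set.mem_iUnion, Set.mem_Iic, Set.mem_image]
                constructor
                · rintro ⟨i, hi, hik⟩; exact ⟨i, hi, hik.symm⟩
                · rintro ⟨i, hi, hik⟩; exact ⟨i, hi, hik.symm⟩
              rw [heq]
              exact (Set.finite_Iic m).biUnion (fun i _ => hfib (σ i))
            obtain ⟨k', hk'⟩ := ((hFfin.union (Set.finite_Iic k)).infinite_compl).nonempty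
            simp only [Set.mem_compl_iff, Set.mem_union, Set.mem_setOf_eq, Set.mem_Iic,
              not_or, not_le] at hk'
            obtain ⟨hk'1, hk'2⟩ := hk'
            obtain ⟨m', _hm', hσm'⟩ := hθmem k'
            refine ⟨(k', m'), hk'2, ?_, hσm'⟩
            by_contra hle
            push_neg at hle
            exact hk'1 ⟨m', hle, hσm'⟩
          choose next hn1 hn2 hn4 using step
          let g : ℕ → ℕ × ℕ := fun j => Nat.rec ((0 : ℕ), m₀) (fun _ km => next km) j
          have hgs : ∀ j, g (j + 1) = next (g j) := fun j => rfl
          have hmono2 : StrictMono (fun j => (g j).2) :=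
            strictMono_nat_of_lt_succ (fun j => by rw [hgs]; exact hn2 (g j))
          have hmono1 : StrictMono (fun j => (g j).1) :=
            strictMono_nat_of_lt_succ (fun j => by rw [hgs]; exact hn1 (g j))
          have heqv : ∀ j, σ ((g j).2) = ρ₀ ((g j).1) := by
            intro j
            cases j with
            | zero => exact hσm₀
            | succ j => rw [hgs]; exact hn4 (g j)
          have htend : Tendsto (σ ∘ fun j => (g j).2) atTop (𝓝 q) := by
            have hcomp : (σ ∘ fun j => (g j).2) = ρ₀ ∘ (fun j => (g j).1) := funext heqv
            rw [hcomp]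
            exact hρ₀q.comp hmono1.tendsto_atTop
          exact hno _ hmono2 q hqD htend
      · exact Or.inr hqD
    have hfip : ∀ u : Finset ℕ, (K ∩ ⋂ n ∈ u, (A n ∪ Dᶜ)).Nonempty := by
      intro u
      refine ⟨σ (u.sup id), hσ _, ?_⟩
      simp only [Set.mem_iInter]
      intro i hi
      exact Or.inl ⟨u.sup id, Finset.le_sup (f := id) hi, rfl⟩
    obtain ⟨p, hpK, hp⟩ := hK.inter_iInter_nonempty _ hBclosed hfip
    simp only [Set.mem_iInter] at hp
    have hpD : p ∈ D := hKD hpK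
    have hpA : ∀ n, p ∈ A n := fun n => (hp n).resolve_right (fun h => h hpD)
    have hinfp : {m | σ m = p}.Infinite := by
      rw [← Nat.frequently_atTop_iff_infinite, Filter.frequently_atTop]
      intro n
      obtain ⟨m, hm, hσm⟩ := hpA n
      exact ⟨m, hm, hσm⟩
    obtain ⟨φ, hφ, hmem⟩ := exists_subseq_mem σ {x | x = p}
      (by simpa [Set.mem_setOf_eq] using hinfp)
    refine hno φ hφ p hpD ?_
    have : σ ∘ φ = fun _ => p := funext fun k => hmem k
    rw [this]
    exact tendsto_const_nhds

  -- main equality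
  funext σ
  ext p
  show p ∈ modOp L D σ ↔ Tendsto σ atTop (@nhds X (sepTop (derivedTop L hL) D) p)
  rw [tendsto_sepTop_iff]
  rw [modOp]
  by_cases hcase : ∃ φ : ℕ → ℕ, StrictMono φ ∧ ∃ q ∈ D, q ∈ L (σ ∘ φ)
  · rw [if_pos hcase]
    obtain ⟨φ, hφ, q, hqD, hqL⟩ := hcase
    have hκ : Tendsto (σ ∘ φ) atTop (𝓝 q) := (hfo _ q).1 hqL
    constructor
    · rintro ⟨hpL, hpD⟩
      have hp1 : Tendsto σ atTop (𝓝 p) := (hfo σ p).1 hpL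
      refine ⟨hp1, ?_⟩
      intro K hKD hKc hpK
      by_contra hcon
      have hinfK : {n | σ n ∈ K}.Infinite :=
        Nat.frequently_atTop_iff_infinite.1
          ((Filter.not_eventually.1 hcon).mono (fun n hn => not_not.1 hn))
      obtain ⟨ψ, hψ, hmemK⟩ := exists_subseq_mem σ K hinfK
      have hκp : Tendsto (σ ∘ ψ) atTop (𝓝 p) := hp1.comp hψ.tendsto_atTop
      have hK' : IsCompact (Subtype.val ⁻¹' K : Set D) := hcompD K hKD hKc
      have hKcl : IsClosed (Subtype.val ⁻¹' K : Set D) := hK'.isClosed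
      have htend' := htendD (σ ∘ ψ) (fun n => hKD (hmemK n)) p hpD hκp
      have hmem' : ∀ᶠ n in atTop,
          (⟨(σ ∘ ψ) n, hKD (hmemK n)⟩ : D) ∈ (Subtype.val ⁻¹' K : Set D) :=
        Filter.Eventually.of_forall (fun n => hmemK n)
      exact hpK (hKcl.mem_of_tendsto htend' hmem')
    · rintro ⟨hp1, hp2⟩
      refine ⟨(hfo σ p).2 hp1, ?_⟩
      -- p ∈ D via local compactness at q
      obtain ⟨s, hsc, hsnhds⟩ := exists_compact_mem_nhds (⟨q, hqD⟩ : D)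
      set K0 : Set X := Subtype.val '' s with hK0
      have hK0D : K0 ⊆ D := by
        rintro x ⟨y, _, rfl⟩; exact y.2
      have hK0c : IsCompact K0 := hsc.image continuous_subtype_val
      have hK0nhds : K0 ∈ 𝓝 q := by
        rw [nhds_subtype_eq_comap] at hsnhds
        obtain ⟨U, hU, hUs⟩ := hsnhds
        refine Filter.mem_of_superset (Filter.inter_mem hU (hDo.mem_nhds hqD)) ?_
        rintro x ⟨hxU, hxD⟩
        exact ⟨⟨x, hxD⟩, hUs hxU, rfl⟩
      by_contra hpK0'
      have hpK0 : p ∉ K0 := fun h => hpK0' (hK0D h)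
      have hev1 : ∀ᶠ n in atTop, σ n ∉ K0 := hp2 K0 hK0D hK0c hpK0
      have hev2 : ∀ᶠ n in atTop, (σ ∘ φ) n ∈ K0 := hκ hK0nhds
      have hev3 : ∀ᶠ n in atTop, (σ ∘ φ) n ∉ K0 := hφ.tendsto_atTop.eventually hev1
      obtain ⟨n, hn1, hn2⟩ := (hev2.and hev3).exists
      exact hn2 hn1
  · rw [if_neg hcase]
    constructor
    · intro hpL
      refine ⟨(hfo σ p).1 hpL, ?_⟩
      intro K hKD hKc hpK
      by_contra hcon
      have hinfK : {n | σ n ∈ K}.Infinite :=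
        Nat.frequently_atTop_iff_infinite.1
          ((Filter.not_eventually.1 hcon).mono (fun n hn => not_not.1 hn))
      obtain ⟨ψ, hψ, hmemK⟩ := exists_subseq_mem σ K hinfK
      obtain ⟨φ₂, hφ₂, q, hqD, hq⟩ := hseqcpt K hKD hKc (σ ∘ ψ) hmemK
      exact hcase ⟨ψ ∘ φ₂, hψ.comp hφ₂, q, hqD, (hfo _ q).2 hq⟩
    · rintro ⟨hp1, _⟩
      exact (hfo σ p).2 hp1

theorem stmt_16 {X : Type u} (L : (ℕ → X) → Set X) (hL : IsLimitOp L)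
    (D : Set X) (hD : @IsOpen X (derivedTop L hL) D)
    (hT2 : @T2Space D (TopologicalSpace.induced (Subtype.val : D → X) (derivedTop L hL)))
    (hLC : @LocallyCompactSpace D (TopologicalSpace.induced (Subtype.val : D → X) (derivedTop L hL)))
    (hM : IsLimitOp (modOp L D))
    (hfo : IsFirstOrderOp L hL) :
    IsFirstOrderOp (modOp L D) hM ∧
    derivedTop (modOp L D) hM = seqModTop (sepTop (derivedTop L hL) D) := by
  have heq : modOp L D = assocLimOp (sepTop (derivedTop L hL) D) :=
    modOp_eq_assoc L hL D hD hT2 hLC hfo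
  have htop : derivedTop (modOp L D) hM = seqModTop (sepTop (derivedTop L hL) D) :=
    derivedTop_congr heq hM (assocLimOp_isLimitOp _)
  refine ⟨?_, htop⟩
  intro σ p
  rw [htop, heq, tendsto_seqModTop_iff]
  exact Iff.rfl
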